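/- f(8, 2, {0,1,2}) = 2: every word of length 8 over a 3-letter alphabet contains two disjoint identical scattered subwords of length 2, while some word of length 7 over a 3-letter alphabet has no two disjoint identical scattered subwords of length 2. -/

import Mathlib

/-- The scattered subword of `S` indexed by the set `I`, taken in increasing order. -/
def extract {α : Type*} (S : List α) (I : Finset ℕ) : List α :=
  (I.sort (· ≤ ·)).filterMap (fun i => S[i]?)

/-- `S` has two disjoint identical scattered subwords of length `ℓ`. -/
def HasTwins {α : Type*} (S : List α) (ℓ : ℕ) : Prop :=
  ∃ I J : Finset ℕ, I ⊆ Finset.range S.length ∧ J ⊆ Finset.range S.length ∧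
    Disjoint I J ∧ I.card = ℓ ∧ J.card = ℓ ∧ extract S I = extract S J

lemma sort_pair {i j : ℕ} (h : i < j) : ({i, j} : Finset ℕ).sort (· ≤ ·) = [i, j] := by
  have h2 : i ∉ ({j} : Finset ℕ) := by simp [h.ne]
  have h1 : ∀ b ∈ ({j} : Finset ℕ), i ≤ b := by simpa using h.le
  have key := Finset.sort_insert (α := ℕ) (r := (· ≤ ·)) h1 h2
  rw [Finset.sort_singleton] at key
  exact key

lemma extract_pair {α : Type*} (S : List α) {i j : ℕ} (h : i < j) :
    extract S {i, j} = List.filterMap (fun k => S[k]?) [i, j] := by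
  rw [extract, sort_pair h]

def TwinsP {α : Type*} (S : List α) : Prop :=
  ∃ i1 < S.length, ∃ j1 < S.length, ∃ i2 < S.length, ∃ j2 < S.length,
    i1 < j1 ∧ i2 < j2 ∧ i1 ≠ i2 ∧ i1 ≠ j2 ∧ j1 ≠ i2 ∧ j1 ≠ j2 ∧
    S[i1]? = S[i2]? ∧ S[j1]? = S[j2]?

instance {α : Type*} [DecidableEq α] (S : List α) : Decidable (TwinsP S) := by
  unfold TwinsP; infer_instance

lemma pair_order {a b : ℕ} (h : a ≠ b) :
    ∃ x y : ℕ, x < y ∧ ({a, b} : Finset ℕ) = {x, y} := by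
  rcases h.lt_or_gt with h' | h'
  · exact ⟨a, b, h', rfl⟩
  · exact ⟨b, a, h', Finset.pair_comm a b⟩

lemma twinsP_of_hasTwins {α : Type*} {S : List α} (h : HasTwins S 2) : TwinsP S := by
  obtain ⟨I, J, hIr, hJr, hdisj, hI2, hJ2, hext⟩ := h
  obtain ⟨a0, b0, hab0, rfl⟩ := Finset.card_eq_two.mp hI2
  obtain ⟨c0, d0, hcd0, rfl⟩ := Finset.card_eq_two.mp hJ2
  obtain ⟨a, b, hab', hIeq⟩ := pair_order hab0
  obtain ⟨c, d, hcd', hJeq⟩ := pair_order hcd0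
  rw [hIeq] at hIr hdisj hext
  rw [hJeq] at hJr hdisj hext
  have ha : a < S.length := by simpa using hIr (by simp)
  have hb : b < S.length := by simpa using hIr (by simp)
  have hc : c < S.length := by simpa using hJr (by simp)
  have hd : d < S.length := by simpa using hJr (by simp)
  rw [extract_pair S hab', extract_pair S hcd'] at hext
  simp only [List.filterMap_cons, List.filterMap_nil,
    List.getElem?_eq_getElem, ha, hb, hc, hd] at hext
  simp only [List.cons.injEq, and_true] at hext
  obtain ⟨ea, eb⟩ := hext
  have hdl := Finset.disjoint_left.mp hdisj
  refine ⟨a, ha, b, hb, c, hc, d, hd, hab', hcd', ?_, ?_, ?_, ?_, ?_, ?_⟩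
  · exact fun e => hdl (a := a) (by simp) (by simp [e])
  · exact fun e => hdl (a := a) (by simp) (by simp [e])
  · exact fun e => hdl (a := b) (by simp) (by simp [e])
  · exact fun e => hdl (a := b) (by simp) (by simp [e])
  · simp [List.getElem?_eq_getElem, ha, hc, ea]
  · simp [List.getElem?_eq_getElem, hb, hd, eb]

lemma hasTwins_of_twinsP {α : Type*} {S : List α} (h : TwinsP S) : HasTwins S 2 := by
  obtain ⟨i1, h1, j1, h2, i2, h3, j2, h4, hij1, hij2, d1, d2, d3, d4, e1, e2⟩ := h
  refine ⟨{i1, j1}, {i2, j2}, ?_, ?_, ?_, ?_, ?_, ?_⟩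
  · intro x hx; simp at hx; rcases hx with rfl | rfl <;> simp [h1, h2]
  · intro x hx; simp at hx; rcases hx with rfl | rfl <;> simp [h3, h4]
  · rw [Finset.disjoint_left]
    intro x hx hx'
    simp at hx hx'
    rcases hx with rfl | rfl <;> rcases hx' with rfl | rfl <;> simp_all
  · rw [Finset.card_insert_of_notMem (by simp [hij1.ne]), Finset.card_singleton]
  · rw [Finset.card_insert_of_notMem (by simp [hij2.ne]), Finset.card_singleton]
  · rw [extract_pair S hij1, extract_pair S hij2]
    simp only [List.filterMap_cons, List.filterMap_nil, e1, e2]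

/-- extract increasing elements from a finset of naturals -/
lemma chain_of_card {s : Finset ℕ} {k : ℕ} (hk : k ≤ s.card) :
    ∃ g : ℕ → ℕ, StrictMonoOn g (Set.Iio k) ∧ ∀ i < k, g i ∈ s := by
  classical
  set L := s.sort (· ≤ ·) with hL
  have hlen : L.length = s.card := Finset.length_sort _
  have hs : L.Pairwise (· < ·) := (Finset.sortedLT_sort s).pairwise
  have hget := List.pairwise_iff_get.mp hs
  refine ⟨fun i => if h : i < k then L.get ⟨i, by omega⟩ else 0, ?_, ?_⟩
  · intro i hi j hj hij
    simp only [Set.mem_Iio] at hi hj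
    dsimp only
    rw [dif_pos hi, dif_pos hj]
    exact hget _ _ (by simpa [Fin.lt_def] using hij)
  · intro i hi
    dsimp only
    rw [dif_pos hi]
    exact (Finset.mem_sort _).mp (L.get_mem _)

lemma twinsP_of_four {α : Type*} {S : List α} {x : α} {p : ℕ → ℕ}
    (hmono : StrictMonoOn p (Set.Iio 4)) (hlt : ∀ i < 4, p i < S.length)
    (hval : ∀ i < 4, S[p i]? = some x) : TwinsP S := by
  have h01 : p 0 < p 1 := hmono (by norm_num) (by norm_num) (by norm_num)
  have h12 : p 1 < p 2 := hmono (by norm_num) (by norm_num) (by norm_num)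
  have h23 : p 2 < p 3 := hmono (by norm_num) (by norm_num) (by norm_num)
  refine ⟨p 0, hlt 0 (by norm_num), p 1, hlt 1 (by norm_num),
    p 2, hlt 2 (by norm_num), p 3, hlt 3 (by norm_num),
    h01, h23, by omega, by omega, by omega, by omega, ?_, ?_⟩
  · rw [hval 0 (by norm_num), hval 2 (by norm_num)]
  · rw [hval 1 (by norm_num), hval 3 (by norm_num)]

lemma twinsP_of_two_triples {α : Type*} {S : List α} {x y : α} (hxy : x ≠ y)
    {p q : ℕ → ℕ}
    (hp : StrictMonoOn p (Set.Iio 3)) (hpl : ∀ i < 3, p i < S.length)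
    (hpv : ∀ i < 3, S[p i]? = some x)
    (hq : StrictMonoOn q (Set.Iio 3)) (hql : ∀ i < 3, q i < S.length)
    (hqv : ∀ i < 3, S[q i]? = some y) : TwinsP S := by
  have hne : ∀ i j, i < 3 → j < 3 → p i ≠ q j := by
    intro i j hi hj e
    apply hxy
    have := hpv i hi
    rw [e, hqv j hj] at this
    exact (Option.some_inj.mp this).symm
  have p01 : p 0 < p 1 := hp (by norm_num) (by norm_num) (by norm_num)
  have p12 : p 1 < p 2 := hp (by norm_num) (by norm_num) (by norm_num)
  have q01 : q 0 < q 1 := hq (by norm_num) (by norm_num) (by norm_num)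
  have q12 : q 1 < q 2 := hq (by norm_num) (by norm_num) (by norm_num)
  have hcase : (p 0 < q 1 ∧ p 1 < q 2) ∨ (q 0 < p 1 ∧ q 1 < p 2) := by omega
  rcases hcase with ⟨h1, h2⟩ | ⟨h1, h2⟩
  · refine ⟨p 0, hpl 0 (by norm_num), q 1, hql 1 (by norm_num),
      p 1, hpl 1 (by norm_num), q 2, hql 2 (by norm_num),
      h1, h2, by omega, hne 0 2 (by norm_num) (by norm_num),
      (hne 1 1 (by norm_num) (by norm_num)).symm, by omega, ?_, ?_⟩
    · rw [hpv 0 (by norm_num), hpv 1 (by norm_num)]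
    · rw [hqv 1 (by norm_num), hqv 2 (by norm_num)]
  · refine ⟨q 0, hql 0 (by norm_num), p 1, hpl 1 (by norm_num),
      q 1, hql 1 (by norm_num), p 2, hpl 2 (by norm_num),
      h1, h2, by omega, (hne 2 0 (by norm_num) (by norm_num)).symm,
      hne 1 1 (by norm_num) (by norm_num), by omega, ?_, ?_⟩
    · rw [hqv 0 (by norm_num), hqv 1 (by norm_num)]
    · rw [hpv 1 (by norm_num), hpv 2 (by norm_num)]

lemma length_eight_twinsP (S : List (Fin 3)) (hS : S.length = 8) : TwinsP S := by
  classical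
  set P : Fin 3 → Finset ℕ :=
    fun x => (Finset.range 8).filter (fun i => S.getD i 0 = x) with hP
  have memP : ∀ x, ∀ i ∈ P x, i < S.length ∧ S[i]? = some x := by
    intro x i hi
    rw [hP] at hi
    simp only [Finset.mem_filter, Finset.mem_range] at hi
    obtain ⟨hi8, hiv⟩ := hi
    have hil : i < S.length := by omega
    refine ⟨hil, ?_⟩
    rw [List.getD_eq_getElem?_getD, List.getElem?_eq_getElem hil] at hiv
    rw [List.getElem?_eq_getElem hil]
    simpa using hiv
  have hsum : ∑ x : Fin 3, (P x).card = 8 := by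
    have := Finset.card_eq_sum_card_fiberwise
      (f := fun i => S.getD i 0) (s := Finset.range 8) (t := Finset.univ)
      (fun i _ => Finset.mem_univ _)
    simpa [hP] using this.symm
  by_cases h4 : ∃ x, 4 ≤ (P x).card
  · obtain ⟨x, hx⟩ := h4
    obtain ⟨g, hg, hgm⟩ := chain_of_card hx
    exact twinsP_of_four (hmono := fun i hi j hj hij => hg hi hj hij)
      (fun i hi => (memP x _ (hgm i hi)).1) (fun i hi => (memP x _ (hgm i hi)).2)
  · push_neg at h4
    rw [Fin.sum_univ_three] at hsum
    have h0 := h4 0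
    have h1 := h4 1
    have h2 := h4 2
    have hcases : (3 ≤ (P 0).card ∧ 3 ≤ (P 1).card) ∨
        (3 ≤ (P 0).card ∧ 3 ≤ (P 2).card) ∨
        (3 ≤ (P 1).card ∧ 3 ≤ (P 2).card) := by omega
    rcases hcases with ⟨ha, hb⟩ | ⟨ha, hb⟩ | ⟨ha, hb⟩
    all_goals {
      obtain ⟨g, hg, hgm⟩ := chain_of_card ha
      obtain ⟨g', hg', hgm'⟩ := chain_of_card hb
      refine twinsP_of_two_triples (by decide) hg
        (fun i hi => (memP _ _ (hgm i hi)).1) (fun i hi => (memP _ _ (hgm i hi)).2)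
        hg' (fun i hi => (memP _ _ (hgm' i hi)).1)
        (fun i hi => (memP _ _ (hgm' i hi)).2)
    }

/-- `f(8, 2, {0,1,2}) = 2`: every ternary word of length 8 has two disjoint identical
scattered subwords of length 2, while some ternary word of length 7 has no two
disjoint identical scattered subwords of length 2. -/
theorem f_eight_two_three :
    (∀ S : List (Fin 3), S.length = 8 → HasTwins S 2) ∧
    (∃ S : List (Fin 3), S.length = 7 ∧ ¬ HasTwins S 2) := by
  constructor
  · intro S hS
    exact hasTwins_of_twinsP (length_eight_twinsP S hS)
  · refine ⟨[0, 1, 2, 2, 2, 1, 0], rfl, ?_⟩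
    intro h
    have hP := twinsP_of_hasTwins h
    revert hP
    decide
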